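/- The elementary cellular automaton with Wolfram number 27, i.e. the CA f on {0,1}^ℤ with f(x)_i = 1 if and only if (x_{i-1}, x_i, x_{i+1}) ∈ {(0,0,0), (0,0,1), (0,1,1), (1,0,0)}, is not von Neumann regular in End({0,1}^ℤ). -/

import Mathlib

/-- The shift map on the full shift `A^ℤ`: `σ(x)_i = x_{i+1}`. -/
def shiftMap {A : Type*} (x : ℤ → A) : ℤ → A := fun i => x (i + 1)

/-- A cellular automaton on the full shift `A^ℤ` (with the product topology,
`A` discrete): a continuous map commuting with the shift. -/
def IsCA {A : Type*} [TopologicalSpace A] (f : (ℤ → A) → (ℤ → A)) : Prop :=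
  Continuous f ∧ ∀ x, f (shiftMap x) = shiftMap (f x)

/-- `f` is von Neumann regular in the monoid `End(A^ℤ)` of cellular automata:
there is a CA `h` with `f ∘ h ∘ f = f` and `h ∘ f ∘ h = h`. -/
def IsRegularCA {A : Type*} [TopologicalSpace A] (f : (ℤ → A) → (ℤ → A)) : Prop :=
  ∃ h : (ℤ → A) → (ℤ → A), IsCA h ∧ f ∘ h ∘ f = f ∧ h ∘ f ∘ h = h

/-- The configuration `0^∞ 1 1 0^∞` with 1s at positions 0 and 1. -/
def yst : ℤ → Bool := fun i => decide (i = 0 ∨ i = 1)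

/-- A preimage of `yst` under rule 27: all 1s to the left, 0 at 0 and 1,
then alternation with 1s at even positions. -/
def xst : ℤ → Bool := fun i => decide (i < 0 ∨ (2 ≤ i ∧ i % 2 = 0))

/-- The elementary cellular automaton with Wolfram number 27 is not von
Neumann regular in End({0,1}^ℤ). Here 1 is represented by `true`. -/
theorem stmt11 (f : (ℤ → Bool) → (ℤ → Bool))
    (hf : ∀ (x : ℤ → Bool) (i : ℤ), f x i = true ↔
      (x (i - 1), x i, x (i + 1)) = (false, false, false) ∨
      (x (i - 1), x i, x (i + 1)) = (false, false, true) ∨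
      (x (i - 1), x i, x (i + 1)) = (false, true, true) ∨
      (x (i - 1), x i, x (i + 1)) = (true, false, false)) :
    ¬ IsRegularCA f := by
  rintro ⟨h, ⟨hcont, hcomm⟩, hfhf, -⟩
  -- f maps xst to yst
  have hfxst : f xst = yst := by
    funext i
    have hiff : f xst i = true ↔ (i = 0 ∨ i = 1) := by
      rw [hf xst i]
      simp only [xst, Prod.mk.injEq, decide_eq_false_iff_not, decide_eq_true_eq]
      omega
    by_cases hi : i = 0 ∨ i = 1
    · rw [hiff.mpr hi]
      simp only [yst]
      exact (decide_eq_true hi).symm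
    · have hfi : f xst i = false := by
        cases hv : f xst i with
        | false => rfl
        | true => exact absurd (hiff.mp hv) hi
      rw [hfi]
      simp only [yst]
      exact (decide_eq_false hi).symm
  -- every preimage of yst is eventually alternating to the right
  have forced : ∀ x : ℤ → Bool, f x = yst →
      ∀ n : ℕ, x (2*(n:ℤ)+2) = true ∧ x (2*(n:ℤ)+3) = false := by
    intro x hx
    have Etrue : ∀ i : ℤ, (i = 0 ∨ i = 1) →
        ((x (i - 1), x i, x (i + 1)) = (false, false, false) ∨
         (x (i - 1), x i, x (i + 1)) = (false, false, true) ∨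
         (x (i - 1), x i, x (i + 1)) = (false, true, true) ∨
         (x (i - 1), x i, x (i + 1)) = (true, false, false)) := by
      intro i hi
      exact (hf x i).mp (by rw [congrFun hx i]; exact decide_eq_true hi)
    have Efalse : ∀ i : ℤ, ¬(i = 0 ∨ i = 1) →
        ¬((x (i - 1), x i, x (i + 1)) = (false, false, false) ∨
         (x (i - 1), x i, x (i + 1)) = (false, false, true) ∨
         (x (i - 1), x i, x (i + 1)) = (false, true, true) ∨
         (x (i - 1), x i, x (i + 1)) = (true, false, false)) := by
      intro i hi hD
      have hT := (hf x i).mpr hD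
      rw [congrFun hx i] at hT
      simp only [yst, decide_eq_true_eq] at hT
      exact hi hT
    have hx0 : x 0 = false := by
      cases h0 : x 0 with
      | false => rfl
      | true =>
        exfalso
        have h01 := Etrue 0 (Or.inl rfl)
        norm_num [Prod.mk.injEq, h0] at h01
        have h11 := Etrue 1 (Or.inr rfl)
        norm_num [Prod.mk.injEq, h0, h01.2] at h11
    have hxm1 : x (-1) = true := by
      cases hm : x (-1) with
      | true => rfl
      | false =>
        exfalso
        have hF := Efalse (-1) (by omega)
        cases hm2 : x (-2) with
        | false =>
          exact hF (Or.inl (by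
            rw [show (-1:ℤ) - 1 = -2 by norm_num, show (-1:ℤ) + 1 = 0 by norm_num,
              hm2, hm, hx0]))
        | true =>
          exact hF (Or.inr (Or.inr (Or.inr (by
            rw [show (-1:ℤ) - 1 = -2 by norm_num, show (-1:ℤ) + 1 = 0 by norm_num,
              hm2, hm, hx0]))))
    have hx1 : x 1 = false := by
      have h01 := Etrue 0 (Or.inl rfl)
      norm_num [Prod.mk.injEq, hx0, hxm1] at h01
      exact h01
    have base : x 2 = true ∧ x 3 = false := by
      have hF := Efalse 2 (by omega)
      cases h2 : x 2 with
      | false =>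
        exfalso
        cases h3 : x 3 with
        | false =>
          exact hF (Or.inl (by
            rw [show (2:ℤ) - 1 = 1 by norm_num, show (2:ℤ) + 1 = 3 by norm_num,
              hx1, h2, h3]))
        | true =>
          exact hF (Or.inr (Or.inl (by
            rw [show (2:ℤ) - 1 = 1 by norm_num, show (2:ℤ) + 1 = 3 by norm_num,
              hx1, h2, h3])))
      | true =>
        cases h3 : x 3 with
        | false => exact ⟨rfl, rfl⟩
        | true =>
          exfalso
          exact hF (Or.inr (Or.inr (Or.inl (by
            rw [show (2:ℤ) - 1 = 1 by norm_num, show (2:ℤ) + 1 = 3 by norm_num,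
              hx1, h2, h3]))))
    intro n
    induction n with
    | zero => simpa using base
    | succ n ih =>
      have hF1 := Efalse (2*(n:ℤ)+3) (by omega)
      rw [show (2*(n:ℤ)+3) - 1 = 2*(n:ℤ)+2 by ring,
          show (2*(n:ℤ)+3) + 1 = 2*(n:ℤ)+4 by ring] at hF1
      have h4 : x (2*(n:ℤ)+4) = true := by
        cases hv : x (2*(n:ℤ)+4) with
        | true => rfl
        | false =>
          exact absurd (Or.inr (Or.inr (Or.inr (by rw [ih.1, ih.2, hv])))) hF1
      have hF2 := Efalse (2*(n:ℤ)+4) (by omega)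
      rw [show (2*(n:ℤ)+4) - 1 = 2*(n:ℤ)+3 by ring,
          show (2*(n:ℤ)+4) + 1 = 2*(n:ℤ)+5 by ring] at hF2
      have h5 : x (2*(n:ℤ)+5) = false := by
        cases hv : x (2*(n:ℤ)+5) with
        | false => rfl
        | true =>
          exact absurd (Or.inr (Or.inr (Or.inl (by rw [ih.2, h4, hv])))) hF2
      constructor
      · rw [show (2*((n:ℕ)+1:ℕ):ℤ)+2 = 2*(n:ℤ)+4 by push_cast; ring]
        exact h4
      · rw [show (2*((n:ℕ)+1:ℕ):ℤ)+3 = 2*(n:ℤ)+5 by push_cast; ring]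
        exact h5
  -- f of all-ones is all-zeros
  have hones : f (fun _ => true) = (fun _ => false) := by
    funext i
    have hT := hf (fun _ => true) i
    simp only [Prod.mk.injEq] at hT
    simp at hT
    exact hT
  -- f of all-zeros at 0 is true
  have hfz0 : f (fun _ => false) 0 = true := (hf _ 0).mpr (Or.inl rfl)
  -- h of all-zeros is all-ones
  have hstep : ∀ i : ℤ, h (fun _ => false) (i + 1) = h (fun _ => false) i := by
    intro i
    have e : shiftMap (h (fun _ => false)) = h (fun _ => false) := by
      rw [← hcomm]; rfl
    exact congrFun e i
  have hc : ∀ i : ℤ, h (fun _ => false) i = h (fun _ => false) 0 := by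
    intro i
    induction i using Int.induction_on with
    | zero => rfl
    | succ k ihk => exact (hstep k).trans ihk
    | pred k ihk =>
      have e := hstep (-(k:ℤ) - 1)
      rw [show (-(k:ℤ) - 1) + 1 = -(k:ℤ) by ring] at e
      exact e.symm.trans ihk
  have hfhz : f (h (fun _ => false)) = (fun _ => false) := by
    have e := congrFun hfhf (fun _ => true)
    simp only [Function.comp_apply] at e
    rw [hones] at e
    exact e
  have h00 : h (fun _ => false) 0 = true := by
    cases hv : h (fun _ => false) 0 with
    | true => rfl
    | false =>
      exfalso
      have hzz : h (fun _ => false) = (fun _ => false) :=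
        funext fun i => (hc i).trans hv
      rw [hzz] at hfhz
      have := congrFun hfhz 0
      rw [hfz0] at this
      exact Bool.noConfusion this
  have hz0T : h (fun _ => false) = (fun _ => true) :=
    funext fun i => (hc i).trans h00
  -- shift iteration lemma
  have hshiftn : ∀ (n : ℕ) (y : ℤ → Bool),
      h (fun i => y (i + (n:ℤ))) = fun i => h y (i + (n:ℤ)) := by
    intro n
    induction n with
    | zero => intro y; simp
    | succ n ih =>
      intro y
      have e1 : (fun i : ℤ => y (i + ((n:ℕ)+1:ℕ))) = shiftMap (fun i => y (i + (n:ℤ))) := by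
        funext i
        simp only [shiftMap]
        congr 1
        push_cast
        ring
      rw [e1, hcomm, ih]
      funext i
      simp only [shiftMap]
      congr 1
      push_cast
      ring
  -- X := h yst is a preimage of yst
  have hX : f (h yst) = yst := by
    have e := congrFun hfhf xst
    simp only [Function.comp_apply] at e
    rw [hfxst] at e
    exact e
  have hXf : ∀ n : ℕ, h yst (2*(n:ℤ)+3) = false := fun n => (forced (h yst) hX n).2
  -- convergence of shifted configurations to all-zeros
  have hTl : Filter.Tendsto (fun n : ℕ => (fun i : ℤ => yst (i + (n:ℤ))))
      Filter.atTop (nhds (fun _ => false)) := by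
    rw [tendsto_pi_nhds]
    intro i
    have hev : ∀ᶠ n : ℕ in Filter.atTop, (fun i : ℤ => yst (i + (n:ℤ))) i = false := by
      rw [Filter.eventually_atTop]
      refine ⟨(2 - i).toNat, fun n hn => ?_⟩
      simp only [yst, decide_eq_false_iff_not]
      omega
    exact Filter.Tendsto.congr' (hev.mono fun n hn => hn.symm) tendsto_const_nhds
  have hTend : Filter.Tendsto (fun n : ℕ => h (fun i : ℤ => yst (i + (n:ℤ))) 0)
      Filter.atTop (nhds (h (fun _ => false) 0)) :=
    (((continuous_apply (0:ℤ)).comp hcont).tendsto _).comp hTl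
  rw [hz0T] at hTend
  have hmem : {(true : Bool)} ∈ nhds ((fun _ => true : ℤ → Bool) 0) := by
    simp [nhds_discrete]
  have hev2 : ∀ᶠ n : ℕ in Filter.atTop, h (fun i : ℤ => yst (i + (n:ℤ))) 0 = true := by
    filter_upwards [hTend hmem] with n hn
    exact hn
  obtain ⟨N, hN⟩ := Filter.eventually_atTop.mp hev2
  have hNN := hN (2*N+3) (by omega)
  rw [hshiftn (2*N+3) yst] at hNN
  have hNN' : h yst ((0:ℤ) + ((2*N+3:ℕ):ℤ)) = true := hNN
  rw [show ((0:ℤ) + ((2*N+3:ℕ):ℤ)) = 2*(N:ℤ)+3 by push_cast; ring] at hNN'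
  rw [hXf N] at hNN'
  exact Bool.noConfusion hNN'
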